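/- A C-Galois extension A(B)^C is cleft (admits a convolution invertible right C-comodule map Φ : C → A) if and only if there exists a left B-module map s : A → B such that the map ŝ : A → B⊗C, ŝ(a) = s(a₍₀₎) ⊗ a₍₁₎, is bijective. -/
import Mathlib


open TensorProduct LinearMap

/-- An entwining structure `(A, C)_ψ`. -/
structure Entwining (k A C : Type) [Field k] [Ring A] [Algebra k A]
    [AddCommGroup C] [Module k C] [Coalgebra k C] where
  ψ : C ⊗[k] A →ₗ[k] A ⊗[k] C
  entw_mul : ψ ∘ₗ (mul' k A).lTensor C =
    (mul' k A).rTensor C ∘ₗ (TensorProduct.assoc k A A C).symm.toLinearMap ∘ₗ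
      ψ.lTensor A ∘ₗ (TensorProduct.assoc k A C A).toLinearMap ∘ₗ
      ψ.rTensor A ∘ₗ (TensorProduct.assoc k C A A).symm.toLinearMap
  entw_unit : ∀ c : C, ψ (c ⊗ₜ[k] 1) = 1 ⊗ₜ[k] c
  entw_comul : (Coalgebra.comul (R := k) (A := C)).lTensor A ∘ₗ ψ =
    (TensorProduct.assoc k A C C).toLinearMap ∘ₗ ψ.rTensor C ∘ₗ
      (TensorProduct.assoc k C A C).symm.toLinearMap ∘ₗ ψ.lTensor C ∘ₗ
      (TensorProduct.assoc k C C A).toLinearMap ∘ₗ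
      (Coalgebra.comul (R := k) (A := C)).rTensor A
  entw_counit : (TensorProduct.rid k A).toLinearMap ∘ₗ
      (Coalgebra.counit (R := k) (A := C)).lTensor A ∘ₗ ψ =
    (TensorProduct.lid k A).toLinearMap ∘ₗ (Coalgebra.counit (R := k) (A := C)).rTensor A

/-- A right `C`-comodule structure on `V`. -/
structure RComod (k C V : Type) [Field k] [AddCommGroup C] [Module k C] [Coalgebra k C]
    [AddCommGroup V] [Module k V] where
  ρ : V →ₗ[k] V ⊗[k] C
  coassoc : (Coalgebra.comul (R := k) (A := C)).lTensor V ∘ₗ ρ =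
    (TensorProduct.assoc k V C C).toLinearMap ∘ₗ ρ.rTensor C ∘ₗ ρ
  counit_id : (TensorProduct.rid k V).toLinearMap ∘ₗ
      (Coalgebra.counit (R := k) (A := C)).lTensor V ∘ₗ ρ = LinearMap.id

/-- A left `C`-comodule structure on `V`. -/
structure LComod (k C V : Type) [Field k] [AddCommGroup C] [Module k C] [Coalgebra k C]
    [AddCommGroup V] [Module k V] where
  ρ : V →ₗ[k] C ⊗[k] V
  coassoc : (Coalgebra.comul (R := k) (A := C)).rTensor V ∘ₗ ρ =
    (TensorProduct.assoc k C C V).symm.toLinearMap ∘ₗ ρ.lTensor C ∘ₗ ρ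
  counit_id : (TensorProduct.lid k V).toLinearMap ∘ₗ
      (Coalgebra.counit (R := k) (A := C)).rTensor V ∘ₗ ρ = LinearMap.id

/-- A right `A`-module structure (`k`-linear) on `M`. -/
structure RAct (k A M : Type) [Field k] [Ring A] [Algebra k A]
    [AddCommGroup M] [Module k M] where
  act : M ⊗[k] A →ₗ[k] M
  act_one : ∀ m : M, act (m ⊗ₜ[k] 1) = m
  act_mul : ∀ (m : M) (a b : A),
    act (act (m ⊗ₜ[k] a) ⊗ₜ[k] b) = act (m ⊗ₜ[k] (a * b))

variable {k A C M : Type} [Field k] [Ring A] [Algebra k A]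
  [AddCommGroup C] [Module k C] [Coalgebra k C] [AddCommGroup M] [Module k M]

/-- The compatibility condition making `M` an entwined `(A,C)_ψ`-module. -/
def EntwCompat (E : Entwining k A C) (α : RAct k A M) (ρM : RComod k C M) : Prop :=
  ρM.ρ ∘ₗ α.act = α.act.rTensor C ∘ₗ (TensorProduct.assoc k M A C).symm.toLinearMap ∘ₗ
    E.ψ.lTensor M ∘ₗ (TensorProduct.assoc k M C A).toLinearMap ∘ₗ ρM.ρ.rTensor A

/-- The `A`-action on `M ⊗ C` induced by an entwining: `(m⊗c)·a = m·a_α ⊗ c^α`. -/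
noncomputable def entwAct (E : Entwining k A C) (ν : M ⊗[k] A →ₗ[k] M) :
    (M ⊗[k] C) ⊗[k] A →ₗ[k] M ⊗[k] C :=
  ν.rTensor C ∘ₗ (TensorProduct.assoc k M A C).symm.toLinearMap ∘ₗ
    E.ψ.lTensor M ∘ₗ (TensorProduct.assoc k M C A).toLinearMap

/-- The `C`-coaction `M ⊗ Δ` on `M ⊗ C`. -/
noncomputable def coactMC (k C M : Type) [Field k] [AddCommGroup C] [Module k C]
    [Coalgebra k C] [AddCommGroup M] [Module k M] :
    M ⊗[k] C →ₗ[k] (M ⊗[k] C) ⊗[k] C :=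
  (TensorProduct.assoc k M C C).symm.toLinearMap ∘ₗ
    (Coalgebra.comul (R := k) (A := C)).lTensor M

/-- The coaction on `V ⊗ A` induced by an entwining: `v⊗a ↦ v₍₀₎ ⊗ ψ(v₍₁₎⊗a)`. -/
noncomputable def entwCoact {V : Type} [AddCommGroup V] [Module k V]
    (E : Entwining k A C) (ρV : V →ₗ[k] V ⊗[k] C) :
    V ⊗[k] A →ₗ[k] (V ⊗[k] A) ⊗[k] C :=
  (TensorProduct.assoc k V A C).symm.toLinearMap ∘ₗ E.ψ.lTensor V ∘ₗ
    (TensorProduct.assoc k V C A).toLinearMap ∘ₗ ρV.rTensor A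

/-- The action `V ⊗ μ` on `V ⊗ A`. -/
noncomputable def actVA (k : Type) (A V : Type) [Field k] [Ring A] [Algebra k A]
    [AddCommGroup V] [Module k V] :
    (V ⊗[k] A) ⊗[k] A →ₗ[k] V ⊗[k] A :=
  (mul' k A).lTensor V ∘ₗ (TensorProduct.assoc k V A A).toLinearMap

/-- The canonical map `A ⊗ₖ A → A ⊗ C`, `a ⊗ a' ↦ a a'₍₀₎ ⊗ a'₍₁₎`. -/
noncomputable def canHat (ΔA : A →ₗ[k] A ⊗[k] C) : A ⊗[k] A →ₗ[k] A ⊗[k] C :=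
  (mul' k A).rTensor C ∘ₗ (TensorProduct.assoc k A A C).symm.toLinearMap ∘ₗ ΔA.lTensor A

/-- The subspace of relations defining `A ⊗_B A` inside `A ⊗ₖ A`. -/
noncomputable def relSub (k : Type) [Field k] {A : Type} [Ring A] [Algebra k A]
    (B : Set A) : Submodule k (A ⊗[k] A) :=
  Submodule.span k {x | ∃ a a' b : A, b ∈ B ∧ x = (a * b) ⊗ₜ[k] a' - a ⊗ₜ[k] (b * a')}

/-- Convolution product of `f g : C → A`. -/
noncomputable def conv (f g : C →ₗ[k] A) : C →ₗ[k] A :=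
  mul' k A ∘ₗ TensorProduct.map f g ∘ₗ Coalgebra.comul (R := k)

/-- The convolution unit `η ∘ ε`. -/
noncomputable def convUnit (k C A : Type) [Field k] [Ring A] [Algebra k A]
    [AddCommGroup C] [Module k C] [Coalgebra k C] : C →ₗ[k] A :=
  Algebra.linearMap k A ∘ₗ Coalgebra.counit (R := k)

variable (k) in
/-- The subalgebra-defining set `B = {b ∈ A : ∀ a, Δ_A(ba) = bΔ_A(a)}`. -/
noncomputable def coinvB (ΔA : A →ₗ[k] A ⊗[k] C) : Set A :=
  {b | ∀ a : A, ΔA (b * a) = (LinearMap.mulLeft k b).rTensor C (ΔA a)}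

/-- `A` as a right module over itself. -/
noncomputable def mulRAct (k A : Type) [Field k] [Ring A] [Algebra k A] : RAct k A A where
  act := mul' k A
  act_one := fun m => by simp [LinearMap.mul'_apply]
  act_mul := fun m a b => by simp [LinearMap.mul'_apply, mul_assoc]

section Statement18Aux

set_option linter.unusedSectionVars false
variable {k A C : Type} [Field k] [Ring A] [Algebra k A]
  [AddCommGroup C] [Module k C] [Coalgebra k C]

/-- `ℓ : A ⊗ (A ⊗ C) → A ⊗ C`, left multiplication into the first leg. -/
noncomputable def st18ell (k A C : Type) [Field k] [Ring A] [Algebra k A]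
    [AddCommGroup C] [Module k C] : A ⊗[k] (A ⊗[k] C) →ₗ[k] A ⊗[k] C :=
  (mul' k A).rTensor C ∘ₗ (TensorProduct.assoc k A A C).symm.toLinearMap

lemma st18ell_tmul (b : A) (x : A ⊗[k] C) :
    st18ell k A C (b ⊗ₜ[k] x) = (LinearMap.mulLeft k b).rTensor C x := by
  induction x using TensorProduct.induction_on with
  | zero => simp [st18ell]
  | tmul y c => simp [st18ell, mul'_apply]
  | add u v hu hv => simp only [tmul_add, map_add, hu, hv]

lemma st18canHat_eq (ρ : A →ₗ[k] A ⊗[k] C) :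
    canHat ρ = st18ell k A C ∘ₗ ρ.lTensor A := by
  rw [canHat, st18ell, comp_assoc]

lemma st18canHat_tmul (ρ : A →ₗ[k] A ⊗[k] C) (a a' : A) :
    canHat ρ (a ⊗ₜ[k] a') = (LinearMap.mulLeft k a).rTensor C (ρ a') := by
  rw [st18canHat_eq, comp_apply, lTensor_tmul, st18ell_tmul]

lemma st18canHat_one_tmul (ρ : A →ₗ[k] A ⊗[k] C) (a' : A) :
    canHat ρ ((1 : A) ⊗ₜ[k] a') = ρ a' := by
  rw [st18canHat_tmul, mulLeft_one, rTensor_id, id_apply]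

lemma st18canHat_mk_one (ρ : A →ₗ[k] A ⊗[k] C) :
    canHat ρ ∘ₗ TensorProduct.mk k A A 1 = ρ := by
  ext a'; exact st18canHat_one_tmul ρ a'

lemma st18canHat_mulLeft (ρ : A →ₗ[k] A ⊗[k] C) (b : A) (w : A ⊗[k] A) :
    canHat ρ ((LinearMap.mulLeft k b).rTensor A w)
      = (LinearMap.mulLeft k b).rTensor C (canHat ρ w) := by
  induction w using TensorProduct.induction_on with
  | zero => simp
  | tmul a a' =>
      rw [rTensor_tmul, mulLeft_apply, st18canHat_tmul, st18canHat_tmul,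
        mulLeft_mul, rTensor_comp, comp_apply]
  | add u v hu hv => simp only [map_add, hu, hv]

lemma st18relSub_stable (B : Set A) (a' : A) :
    Submodule.map ((LinearMap.mulRight k a').lTensor A) (relSub k B) ≤ relSub k B := by
  rw [relSub, Submodule.map_span, Submodule.span_le]
  rintro _ ⟨x, ⟨a, a'', b, hb, rfl⟩, rfl⟩
  refine Submodule.subset_span ⟨a, a'' * a', b, hb, ?_⟩
  simp [mul_assoc]

/-- The descended right `A`-action on `A ⊗ C` (via a linear section `σ` of `canHat`). -/
noncomputable def st18D (ρ : A →ₗ[k] A ⊗[k] C) (σ : A ⊗[k] C →ₗ[k] A ⊗[k] A) :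
    (A ⊗[k] C) ⊗[k] A →ₗ[k] A ⊗[k] C :=
  canHat ρ ∘ₗ (mul' k A).lTensor A ∘ₗ (TensorProduct.assoc k A A A).toLinearMap ∘ₗ σ.rTensor A

lemma st18D_apply (ρ : A →ₗ[k] A ⊗[k] C) (σ : A ⊗[k] C →ₗ[k] A ⊗[k] A)
    (x : A ⊗[k] C) (a' : A) :
    st18D ρ σ (x ⊗ₜ[k] a') = canHat ρ ((LinearMap.mulRight k a').lTensor A (σ x)) := by
  simp only [st18D, comp_apply, rTensor_tmul]
  congr 1
  generalize σ x = w
  induction w using TensorProduct.induction_on with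
  | zero => simp only [zero_tmul, map_zero]
  | tmul u v => simp only [LinearEquiv.coe_coe, assoc_tmul, lTensor_tmul, mul'_apply,
      mulRight_apply]
  | add u v hu hv => simp only [add_tmul, map_add, hu, hv]

variable {ρ : A →ₗ[k] A ⊗[k] C} {σ : A ⊗[k] C →ₗ[k] A ⊗[k] A} {B : Set A}

lemma st18D_canHat (hσ : canHat ρ ∘ₗ σ = LinearMap.id)
    (hker : LinearMap.ker (canHat ρ) = relSub k B) (w : A ⊗[k] A) (a' : A) :
    st18D ρ σ (canHat ρ w ⊗ₜ[k] a')
      = canHat ρ ((LinearMap.mulRight k a').lTensor A w) := by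
  rw [st18D_apply]
  have hmem : σ (canHat ρ w) - w ∈ LinearMap.ker (canHat ρ) := by
    simp only [mem_ker, map_sub, sub_eq_zero]
    exact congrFun (congrArg DFunLike.coe hσ) (canHat ρ w)
  have h2 : (LinearMap.mulRight k a').lTensor A (σ (canHat ρ w) - w)
      ∈ LinearMap.ker (canHat ρ) := by
    rw [hker] at hmem ⊢
    exact st18relSub_stable B a' ⟨_, hmem, rfl⟩
  rw [mem_ker, map_sub, map_sub, sub_eq_zero] at h2
  rw [← h2]

lemma st18P1 (hσ : canHat ρ ∘ₗ σ = LinearMap.id)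
    (hker : LinearMap.ker (canHat ρ) = relSub k B) (x y : A) :
    ρ (x * y) = st18D ρ σ (ρ x ⊗ₜ[k] y) := by
  calc ρ (x * y) = canHat ρ (1 ⊗ₜ[k] (x * y)) := (st18canHat_one_tmul ρ _).symm
    _ = canHat ρ ((LinearMap.mulRight k y).lTensor A ((1 : A) ⊗ₜ[k] x)) := by
        rw [lTensor_tmul, mulRight_apply]
    _ = st18D ρ σ (canHat ρ ((1 : A) ⊗ₜ[k] x) ⊗ₜ[k] y) := (st18D_canHat hσ hker _ _).symm
    _ = st18D ρ σ (ρ x ⊗ₜ[k] y) := by rw [st18canHat_one_tmul]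

lemma st18P1map (hσ : canHat ρ ∘ₗ σ = LinearMap.id)
    (hker : LinearMap.ker (canHat ρ) = relSub k B) :
    ρ ∘ₗ mul' k A = st18D ρ σ ∘ₗ ρ.rTensor A := by
  apply TensorProduct.ext'
  intro x y
  simp only [comp_apply, mul'_apply, rTensor_tmul]
  exact st18P1 hσ hker x y

lemma st18P2 (hσ : canHat ρ ∘ₗ σ = LinearMap.id)
    (hker : LinearMap.ker (canHat ρ) = relSub k B)
    (hsurj : Function.Surjective (canHat ρ)) (b : A) (x : A ⊗[k] C) (a' : A) :
    st18D ρ σ ((LinearMap.mulLeft k b).rTensor C x ⊗ₜ[k] a')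
      = (LinearMap.mulLeft k b).rTensor C (st18D ρ σ (x ⊗ₜ[k] a')) := by
  obtain ⟨w, rfl⟩ := hsurj x
  rw [← st18canHat_mulLeft, st18D_canHat hσ hker, st18D_canHat hσ hker]
  have hcomm : (LinearMap.mulRight k a').lTensor A ∘ₗ (LinearMap.mulLeft k b).rTensor A
      = (LinearMap.mulLeft k b).rTensor A ∘ₗ (LinearMap.mulRight k a').lTensor A := by
    rw [lTensor_comp_rTensor, rTensor_comp_lTensor]
  have := congrFun (congrArg DFunLike.coe hcomm) w
  simp only [comp_apply] at this
  rw [this, st18canHat_mulLeft]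


variable {ρ : A →ₗ[k] A ⊗[k] C} {σ : A ⊗[k] C →ₗ[k] A ⊗[k] A} {B : Set A}
  {Φ Φinv : C →ₗ[k] A}

/-- `Ψ(c) = Φ⁻¹(c₁) ⋅ ρ(Φ(c₂))` equals `c ↦ 1 ⊗ c`. -/
lemma st18S1 (hΦ : ρ ∘ₗ Φ = Φ.rTensor C ∘ₗ Coalgebra.comul (R := k))
    (h21 : conv Φinv Φ = convUnit k C A) :
    st18ell k A C ∘ₗ TensorProduct.map Φinv (ρ ∘ₗ Φ) ∘ₗ Coalgebra.comul (R := k)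
      = TensorProduct.mk k A C 1 := by
  rw [hΦ]
  ext c
  simp only [comp_apply, mk_apply]
  have hsplit : TensorProduct.map Φinv (Φ.rTensor C ∘ₗ Coalgebra.comul (R := k))
      = TensorProduct.map Φinv (Φ.rTensor C) ∘ₗ
        (Coalgebra.comul (R := k) (A := C)).lTensor C := by
    apply TensorProduct.ext'
    intro x y
    simp only [map_tmul, comp_apply, lTensor_tmul]
  rw [LinearMap.congr_fun hsplit (Coalgebra.comul c), comp_apply,
    ← Coalgebra.coassoc_apply c]
  have S1a : st18ell k A C ∘ₗ TensorProduct.map Φinv (Φ.rTensor C)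
      ∘ₗ (TensorProduct.assoc k C C C).toLinearMap
      = (mul' k A ∘ₗ TensorProduct.map Φinv Φ).rTensor C := by
    ext c1 c2 c3
    simp [st18ell_tmul, mul'_apply]
  have := LinearMap.congr_fun S1a ((Coalgebra.comul (R := k)).rTensor C (Coalgebra.comul c))
  simp only [comp_apply, LinearEquiv.coe_coe] at this
  rw [this]
  rw [← comp_apply, ← rTensor_comp, LinearMap.comp_assoc]
  have hconv : mul' k A ∘ₗ TensorProduct.map Φinv Φ ∘ₗ Coalgebra.comul (R := k)
      = convUnit k C A := h21
  rw [hconv, convUnit]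
  rw [rTensor_comp, comp_apply, Coalgebra.rTensor_counit_comul]
  simp [Algebra.linearMap]

lemma st18P2map (hσ : canHat ρ ∘ₗ σ = LinearMap.id)
    (hker : LinearMap.ker (canHat ρ) = relSub k B)
    (hsurj : Function.Surjective (canHat ρ)) :
    st18D ρ σ ∘ₗ (st18ell k A C).rTensor A
      = st18ell k A C ∘ₗ (st18D ρ σ).lTensor A
          ∘ₗ (TensorProduct.assoc k A (A ⊗[k] C) A).toLinearMap := by
  ext b u c a'
  simp only [TensorProduct.AlgebraTensorModule.curry_apply, TensorProduct.curry_apply,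
    restrictScalars_apply, comp_apply, LinearEquiv.coe_coe, assoc_tmul,
    rTensor_tmul, lTensor_tmul, st18ell_tmul]
  exact st18P2 hσ hker hsurj b (u ⊗ₜ[k] c) a'

/-- The key lemma: `c ↦ Σ (1 ⊗ c₁) ◁ Φ⁻¹(c₂)` equals `c ↦ Φ⁻¹(c) ρ(1)`. -/
lemma st18PL (hσ : canHat ρ ∘ₗ σ = LinearMap.id)
    (hker : LinearMap.ker (canHat ρ) = relSub k B)
    (hsurj : Function.Surjective (canHat ρ))
    (hΦ : ρ ∘ₗ Φ = Φ.rTensor C ∘ₗ Coalgebra.comul (R := k))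
    (h12 : conv Φ Φinv = convUnit k C A)
    (h21 : conv Φinv Φ = convUnit k C A) (c : C) :
    st18D ρ σ (TensorProduct.map (TensorProduct.mk k A C 1) Φinv
        (Coalgebra.comul (R := k) c))
      = canHat ρ (Φinv c ⊗ₜ[k] 1) := by
  rw [← st18S1 hΦ h21]
  set Ψ : C →ₗ[k] A ⊗[k] C :=
    st18ell k A C ∘ₗ TensorProduct.map Φinv (ρ ∘ₗ Φ) ∘ₗ Coalgebra.comul (R := k) with hΨ
  -- step 1: split map Ψ Φinv
  have hsplit2 : TensorProduct.map Ψ Φinv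
      = Ψ.rTensor A ∘ₗ Φinv.lTensor C := by
    apply TensorProduct.ext'
    intro x y
    simp only [map_tmul, comp_apply, lTensor_tmul, rTensor_tmul]
  rw [LinearMap.congr_fun hsplit2 (Coalgebra.comul (R := k) c), comp_apply]
  have hsplit3 : Ψ.rTensor A = (st18ell k A C).rTensor A
      ∘ₗ ((TensorProduct.map Φinv (ρ ∘ₗ Φ)).rTensor A
        ∘ₗ (Coalgebra.comul (R := k) (A := C)).rTensor A) := by
    rw [hΨ, ← rTensor_comp, ← rTensor_comp]
  rw [LinearMap.congr_fun hsplit3 (Φinv.lTensor C (Coalgebra.comul (R := k) c))]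
  simp only [comp_apply]
  set v := (TensorProduct.map Φinv (ρ ∘ₗ Φ)).rTensor A
      ((Coalgebra.comul (R := k) (A := C)).rTensor A
        (Φinv.lTensor C (Coalgebra.comul (R := k) c))) with hv
  have hP2 := LinearMap.congr_fun (st18P2map hσ hker hsurj) v
  simp only [comp_apply, LinearEquiv.coe_coe] at hP2
  rw [hP2]
  have ID1 : (TensorProduct.assoc k A (A ⊗[k] C) A).toLinearMap
      ∘ₗ (TensorProduct.map Φinv (ρ ∘ₗ Φ)).rTensor A
      = TensorProduct.map Φinv ((ρ ∘ₗ Φ).rTensor A)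
        ∘ₗ (TensorProduct.assoc k C C A).toLinearMap := by
    ext c1 c2 a
    simp
  have hID1 := LinearMap.congr_fun ID1
      ((Coalgebra.comul (R := k) (A := C)).rTensor A
        (Φinv.lTensor C (Coalgebra.comul (R := k) c)))
  simp only [comp_apply, LinearEquiv.coe_coe] at hID1
  rw [hv, hID1]
  have ID1b : (st18D ρ σ).lTensor A ∘ₗ TensorProduct.map Φinv ((ρ ∘ₗ Φ).rTensor A)
      = TensorProduct.map Φinv (ρ ∘ₗ mul' k A ∘ₗ Φ.rTensor A) := by
    rw [LinearMap.lTensor_comp_map]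
    congr 1
    rw [rTensor_comp, ← LinearMap.comp_assoc, ← st18P1map hσ hker, LinearMap.comp_assoc]
  have hID1b := LinearMap.congr_fun ID1b
      ((TensorProduct.assoc k C C A)
        ((Coalgebra.comul (R := k) (A := C)).rTensor A
          (Φinv.lTensor C (Coalgebra.comul (R := k) c))))
  simp only [comp_apply] at hID1b
  rw [hID1b]
  have ID1c : TensorProduct.map Φinv (ρ ∘ₗ mul' k A ∘ₗ Φ.rTensor A)
      = ρ.lTensor A ∘ₗ TensorProduct.map Φinv (mul' k A ∘ₗ Φ.rTensor A) := by
    rw [LinearMap.lTensor_comp_map]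
  rw [LinearMap.congr_fun ID1c _, comp_apply,
    ← comp_apply (st18ell k A C) (ρ.lTensor A), ← st18canHat_eq]
  congr 1
  -- now the inner identity in A ⊗ A
  have h9 : (Coalgebra.comul (R := k) (A := C)).rTensor A ∘ₗ Φinv.lTensor C
      = Φinv.lTensor (C ⊗[k] C) ∘ₗ (Coalgebra.comul (R := k) (A := C)).rTensor C := by
    rw [LinearMap.rTensor_comp_lTensor, LinearMap.lTensor_comp_rTensor]
  rw [← comp_apply, h9, comp_apply, ← Coalgebra.coassoc_symm_apply c]
  have ID2a : (TensorProduct.assoc k C C A).toLinearMap ∘ₗ Φinv.lTensor (C ⊗[k] C)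
      ∘ₗ (TensorProduct.assoc k C C C).symm.toLinearMap
      = (Φinv.lTensor C).lTensor C := by
    ext c1 c2 c3
    simp
  have hID2a := LinearMap.congr_fun ID2a
      ((Coalgebra.comul (R := k) (A := C)).lTensor C (Coalgebra.comul (R := k) c))
  simp only [comp_apply, LinearEquiv.coe_coe] at hID2a
  rw [hID2a]
  have ID2b : TensorProduct.map Φinv (mul' k A ∘ₗ Φ.rTensor A) ∘ₗ (Φinv.lTensor C).lTensor C
      = TensorProduct.map Φinv (mul' k A ∘ₗ TensorProduct.map Φ Φinv) := by
    rw [LinearMap.map_comp_lTensor]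
    congr 1
    rw [LinearMap.comp_assoc, LinearMap.rTensor_comp_lTensor]
  rw [← comp_apply, ID2b]
  have ID2c : TensorProduct.map Φinv (mul' k A ∘ₗ TensorProduct.map Φ Φinv) ∘ₗ
      (Coalgebra.comul (R := k) (A := C)).lTensor C
      = TensorProduct.map Φinv (convUnit k C A) := by
    rw [LinearMap.map_comp_lTensor]
    have hh : (mul' k A ∘ₗ TensorProduct.map Φ Φinv) ∘ₗ Coalgebra.comul (R := k)
        = convUnit k C A := by
      rw [LinearMap.comp_assoc]; exact h12
    rw [hh]
  rw [← comp_apply, ID2c]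
  have ID2d : TensorProduct.map Φinv (convUnit k C A)
      = TensorProduct.map Φinv (Algebra.linearMap k A)
        ∘ₗ (Coalgebra.counit (R := k) (A := C)).lTensor C := by
    rw [LinearMap.map_comp_lTensor, convUnit]
  rw [ID2d, comp_apply, Coalgebra.lTensor_counit_comul]
  simp

lemma st18W (hσ : canHat ρ ∘ₗ σ = LinearMap.id)
    (hker : LinearMap.ker (canHat ρ) = relSub k B)
    (hsurj : Function.Surjective (canHat ρ))
    (hΦ : ρ ∘ₗ Φ = Φ.rTensor C ∘ₗ Coalgebra.comul (R := k))
    (h12 : conv Φ Φinv = convUnit k C A)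
    (h21 : conv Φinv Φ = convUnit k C A) (x : A ⊗[k] C) :
    st18D ρ σ ((Φinv.lTensor (A ⊗[k] C))
        ((TensorProduct.assoc k A C C).symm
          (((Coalgebra.comul (R := k) (A := C)).lTensor A) x)))
      = st18ell k A C ((mul' k A ((Φinv.lTensor A) x)) ⊗ₜ[k] ρ 1) := by
  induction x using TensorProduct.induction_on with
  | zero => simp
  | add u v hu hv => simp only [map_add, add_tmul, hu, hv]
  | tmul u c =>
    obtain ⟨S, hS⟩ := TensorProduct.exists_finset (Coalgebra.comul (R := k) c)
    have step1 : st18D ρ σ ((Φinv.lTensor (A ⊗[k] C))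
        ((TensorProduct.assoc k A C C).symm
          (((Coalgebra.comul (R := k) (A := C)).lTensor A) (u ⊗ₜ[k] c))))
        = ∑ i ∈ S, st18D ρ σ ((u ⊗ₜ[k] i.1) ⊗ₜ[k] Φinv i.2) := by
      rw [lTensor_tmul, hS, tmul_sum, map_sum, map_sum, map_sum]
      exact Finset.sum_congr rfl fun i _ => by
        rw [TensorProduct.assoc_symm_tmul, lTensor_tmul]
    have step2 : ∀ i : C × C, st18D ρ σ ((u ⊗ₜ[k] i.1) ⊗ₜ[k] Φinv i.2)
        = (LinearMap.mulLeft k u).rTensor C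
            (st18D ρ σ (((1 : A) ⊗ₜ[k] i.1) ⊗ₜ[k] Φinv i.2)) := by
      intro i
      rw [show u ⊗ₜ[k] i.1 = (LinearMap.mulLeft k u).rTensor C ((1 : A) ⊗ₜ[k] i.1) by
        rw [rTensor_tmul, mulLeft_apply, mul_one]]
      exact st18P2 hσ hker hsurj u ((1 : A) ⊗ₜ[k] i.1) (Φinv i.2)
    have step3 : ∑ i ∈ S, st18D ρ σ (((1 : A) ⊗ₜ[k] i.1) ⊗ₜ[k] Φinv i.2)
        = st18D ρ σ (TensorProduct.map (TensorProduct.mk k A C 1) Φinv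
            (Coalgebra.comul (R := k) c)) := by
      rw [hS, map_sum, map_sum]
      exact Finset.sum_congr rfl fun i _ => by rw [map_tmul, mk_apply]
    rw [step1, Finset.sum_congr rfl fun i _ => step2 i, ← map_sum, step3,
      st18PL hσ hker hsurj hΦ h12 h21 c, st18canHat_tmul, lTensor_tmul, mul'_apply,
      st18ell_tmul, mulLeft_mul, rTensor_comp, comp_apply]

lemma st18ML (hσ : canHat ρ ∘ₗ σ = LinearMap.id)
    (hker : LinearMap.ker (canHat ρ) = relSub k B)
    (hsurj : Function.Surjective (canHat ρ))
    (hΦ : ρ ∘ₗ Φ = Φ.rTensor C ∘ₗ Coalgebra.comul (R := k))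
    (h12 : conv Φ Φinv = convUnit k C A)
    (h21 : conv Φinv Φ = convUnit k C A)
    (hco : (Coalgebra.comul (R := k) (A := C)).lTensor A ∘ₗ ρ =
      (TensorProduct.assoc k A C C).toLinearMap ∘ₗ ρ.rTensor C ∘ₗ ρ) (a : A) :
    ρ (mul' k A ((Φinv.lTensor A) (ρ a)))
      = (LinearMap.mulLeft k (mul' k A ((Φinv.lTensor A) (ρ a)))).rTensor C (ρ 1) := by
  have h1 := LinearMap.congr_fun (st18P1map hσ hker (σ := σ)) ((Φinv.lTensor A) (ρ a))
  simp only [comp_apply] at h1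
  rw [h1]
  have h2 : ρ.rTensor A ∘ₗ Φinv.lTensor A = Φinv.lTensor (A ⊗[k] C) ∘ₗ ρ.rTensor C := by
    rw [LinearMap.rTensor_comp_lTensor, LinearMap.lTensor_comp_rTensor]
  have h2' := LinearMap.congr_fun h2 (ρ a)
  simp only [comp_apply] at h2'
  rw [h2']
  have h3 : (ρ.rTensor C) (ρ a) = (TensorProduct.assoc k A C C).symm
      (((Coalgebra.comul (R := k) (A := C)).lTensor A) (ρ a)) := by
    have h4 := LinearMap.congr_fun hco a
    simp only [comp_apply, LinearEquiv.coe_coe] at h4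
    rw [h4, LinearEquiv.symm_apply_apply]
  rw [h3, st18W hσ hker hsurj hΦ h12 h21 (ρ a), st18ell_tmul]

lemma st18coinv (hσ : canHat ρ ∘ₗ σ = LinearMap.id)
    (hker : LinearMap.ker (canHat ρ) = relSub k B)
    (hsurj : Function.Surjective (canHat ρ))
    (hΦ : ρ ∘ₗ Φ = Φ.rTensor C ∘ₗ Coalgebra.comul (R := k))
    (h12 : conv Φ Φinv = convUnit k C A)
    (h21 : conv Φinv Φ = convUnit k C A)
    (hco : (Coalgebra.comul (R := k) (A := C)).lTensor A ∘ₗ ρ =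
      (TensorProduct.assoc k A C C).toLinearMap ∘ₗ ρ.rTensor C ∘ₗ ρ) (a a' : A) :
    ρ ((mul' k A ((Φinv.lTensor A) (ρ a))) * a')
      = (LinearMap.mulLeft k (mul' k A ((Φinv.lTensor A) (ρ a)))).rTensor C (ρ a') := by
  rw [st18P1 hσ hker, st18ML hσ hker hsurj hΦ h12 h21 hco,
    st18P2 hσ hker hsurj, ← st18P1 hσ hker, one_mul]

lemma st18mull : mul' k A ∘ₗ (Algebra.linearMap k A).lTensor A
    = (TensorProduct.rid k A).toLinearMap := by
  apply TensorProduct.ext'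
  intro a r
  simp only [comp_apply, lTensor_tmul, Algebra.linearMap_apply, mul'_apply,
    LinearEquiv.coe_coe, rid_tmul]
  rw [Algebra.smul_def, ← Algebra.commutes]

lemma st18mulLin (f : C →ₗ[k] A) (b : A) (z : A ⊗[k] C) :
    mul' k A ((f.lTensor A) ((LinearMap.mulLeft k b).rTensor C z))
      = b * mul' k A ((f.lTensor A) z) := by
  induction z using TensorProduct.induction_on with
  | zero => simp
  | tmul u c => simp only [rTensor_tmul, mulLeft_apply, lTensor_tmul, mul'_apply, mul_assoc]
  | add u v hu hv => simp only [map_add, hu, hv, mul_add]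

lemma st18KEY1
    (hco : (Coalgebra.comul (R := k) (A := C)).lTensor A ∘ₗ ρ =
      (TensorProduct.assoc k A C C).toLinearMap ∘ₗ ρ.rTensor C ∘ₗ ρ)
    (hcu : (TensorProduct.rid k A).toLinearMap ∘ₗ
      (Coalgebra.counit (R := k) (A := C)).lTensor A ∘ₗ ρ = LinearMap.id)
    (h21 : conv Φinv Φ = convUnit k C A) (a : A) :
    mul' k A (TensorProduct.map (mul' k A ∘ₗ Φinv.lTensor A ∘ₗ ρ) Φ (ρ a)) = a := by
  set s0 : A →ₗ[k] A := mul' k A ∘ₗ Φinv.lTensor A ∘ₗ ρ with hs0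
  have e1 : TensorProduct.map s0 Φ = Φ.lTensor A ∘ₗ s0.rTensor C := by
    rw [LinearMap.lTensor_comp_rTensor]
  rw [LinearMap.congr_fun e1 (ρ a), comp_apply]
  have e2 : s0.rTensor C = (mul' k A).rTensor C ∘ₗ ((Φinv.lTensor A).rTensor C
      ∘ₗ ρ.rTensor C) := by
    rw [hs0, ← rTensor_comp, ← rTensor_comp]
  rw [LinearMap.congr_fun e2 (ρ a)]
  simp only [comp_apply]
  have e3 : (ρ.rTensor C) (ρ a) = (TensorProduct.assoc k A C C).symm
      (((Coalgebra.comul (R := k) (A := C)).lTensor A) (ρ a)) := by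
    have h4 := LinearMap.congr_fun hco a
    simp only [comp_apply, LinearEquiv.coe_coe] at h4
    rw [h4, LinearEquiv.symm_apply_apply]
  rw [e3]
  have V : mul' k A ∘ₗ Φ.lTensor A ∘ₗ (mul' k A).rTensor C ∘ₗ (Φinv.lTensor A).rTensor C
      ∘ₗ (TensorProduct.assoc k A C C).symm.toLinearMap
      = mul' k A ∘ₗ (mul' k A ∘ₗ TensorProduct.map Φinv Φ).lTensor A := by
    ext a' c c'
    simp [mul'_apply, mul_assoc]
  have hV := LinearMap.congr_fun V (((Coalgebra.comul (R := k) (A := C)).lTensor A) (ρ a))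
  simp only [comp_apply, LinearEquiv.coe_coe] at hV
  rw [hV]
  have e4 : ((mul' k A ∘ₗ TensorProduct.map Φinv Φ).lTensor A)
      (((Coalgebra.comul (R := k) (A := C)).lTensor A) (ρ a))
      = ((convUnit k C A).lTensor A) (ρ a) := by
    rw [← comp_apply, ← lTensor_comp]
    have hh : (mul' k A ∘ₗ TensorProduct.map Φinv Φ) ∘ₗ Coalgebra.comul (R := k)
        = convUnit k C A := by
      rw [LinearMap.comp_assoc]; exact h21
    rw [hh]
  have h6 := LinearMap.congr_fun st18mull
      ((Coalgebra.counit (R := k) (A := C)).lTensor A (ρ a))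
  simp only [comp_apply, LinearEquiv.coe_coe] at h6
  rw [e4, convUnit, lTensor_comp, comp_apply, h6]
  have h5 := LinearMap.congr_fun hcu a
  simp only [comp_apply, LinearEquiv.coe_coe, id_apply] at h5
  exact h5

lemma st18sPhi (hΦ : ρ ∘ₗ Φ = Φ.rTensor C ∘ₗ Coalgebra.comul (R := k))
    (h12 : conv Φ Φinv = convUnit k C A) (c : C) :
    mul' k A ((Φinv.lTensor A) (ρ (Φ c)))
      = algebraMap k A (Coalgebra.counit (R := k) c) := by
  have h1 := LinearMap.congr_fun hΦ c
  simp only [comp_apply] at h1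
  rw [h1]
  have h2' : Φinv.lTensor A ∘ₗ Φ.rTensor C = TensorProduct.map Φ Φinv := by
    rw [LinearMap.lTensor_comp_rTensor]
  have h2 := LinearMap.congr_fun h2' (Coalgebra.comul (R := k) c)
  simp only [comp_apply] at h2
  rw [h2]
  have h3 := LinearMap.congr_fun h12 c
  simp only [conv, convUnit, comp_apply, Algebra.linearMap_apply] at h3
  exact h3

lemma st18counitsum {c : C} {S : Finset (C × C)}
    (hS : Coalgebra.comul (R := k) c = ∑ i ∈ S, i.1 ⊗ₜ[k] i.2) :
    ∑ i ∈ S, Coalgebra.counit (R := k) i.1 • i.2 = c := by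
  have h := Coalgebra.rTensor_counit_comul (R := k) c
  rw [hS, map_sum] at h
  have h2 := congrArg (TensorProduct.lid k C) h
  simp only [map_sum, rTensor_tmul, lid_tmul, one_smul] at h2
  exact h2

lemma st18E_mulLeft (b : A) (z : A ⊗[k] C) :
    (TensorProduct.rid k A) (((Coalgebra.counit (R := k) (A := C)).lTensor A)
        ((LinearMap.mulLeft k b).rTensor C z))
      = b * (TensorProduct.rid k A)
          (((Coalgebra.counit (R := k) (A := C)).lTensor A) z) := by
  induction z using TensorProduct.induction_on with
  | zero => simp
  | tmul u c =>
      simp only [rTensor_tmul, mulLeft_apply, lTensor_tmul, rid_tmul]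
      rw [mul_smul_comm]
  | add u v hu hv => simp only [map_add, hu, hv, mul_add]

lemma st18F {V : Type} [AddCommGroup V] [Module k V] (s' : A →ₗ[k] V) :
    (TensorProduct.rid k V).toLinearMap ∘ₗ (Coalgebra.counit (R := k) (A := C)).lTensor V
        ∘ₗ s'.rTensor C
      = s' ∘ₗ (TensorProduct.rid k A).toLinearMap
          ∘ₗ (Coalgebra.counit (R := k) (A := C)).lTensor A := by
  apply TensorProduct.ext'
  intro a c
  simp only [comp_apply, rTensor_tmul, lTensor_tmul, LinearEquiv.coe_coe, rid_tmul,
    map_smul]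

lemma st18swap {V : Type} [AddCommGroup V] [Module k V] (s' : A →ₗ[k] V) (a : A)
    (y : C ⊗[k] C) :
    ((s'.rTensor C).rTensor C) ((TensorProduct.assoc k A C C).symm (a ⊗ₜ[k] y))
      = (TensorProduct.assoc k V C C).symm (s' a ⊗ₜ[k] y) := by
  induction y using TensorProduct.induction_on with
  | zero => simp
  | tmul c c' => simp
  | add u v hu hv => simp only [tmul_add, map_add, hu, hv]

lemma st18mk1 {V : Type} [AddCommGroup V] [Module k V] (m0 : V) (y : C ⊗[k] C) :
    ((TensorProduct.mk k V C m0).rTensor C) y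
      = (TensorProduct.assoc k V C C).symm (m0 ⊗ₜ[k] y) := by
  induction y using TensorProduct.induction_on with
  | zero => simp
  | tmul c c' => simp [mk_apply]
  | add u v hu hv => simp only [tmul_add, map_add, hu, hv]

end Statement18Aux

set_option maxHeartbeats 2000000 in
set_option synthInstance.maxHeartbeats 400000 in
/-- a `C`-Galois extension `A(B)^C` is cleft (admits a convolution
invertible right `C`-comodule map `Φ : C → A`) iff there is a left `B`-module map
`s : A → B` such that `ŝ : A → B ⊗ C`, `a ↦ s(a₍₀₎) ⊗ a₍₁₎`, is bijective. -/
theorem statement18 {k A C : Type} [Field k] [Ring A] [Algebra k A]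
    [AddCommGroup C] [Module k C] [Coalgebra k C]
    (ΔA : RComod k C A) (B : Subalgebra k A)
    (hB : ∀ b : A, b ∈ B ↔ b ∈ coinvB k ΔA.ρ)
    (hsurj : Function.Surjective (canHat ΔA.ρ))
    (hker : LinearMap.ker (canHat ΔA.ρ) = relSub k (coinvB k ΔA.ρ)) :
    (∃ Φ Φinv : C →ₗ[k] A,
      conv Φ Φinv = convUnit k C A ∧ conv Φinv Φ = convUnit k C A ∧
      ΔA.ρ ∘ₗ Φ = Φ.rTensor C ∘ₗ Coalgebra.comul (R := k)) ↔
    (∃ s : A →ₗ[k] ↥B,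
      (∀ (b : ↥B) (a : A), s ((b : A) * a) = b * s a) ∧
      Function.Bijective (s.rTensor C ∘ₗ ΔA.ρ)) := by
  constructor
  · rintro ⟨Φ, Φinv, h12, h21, hΦ⟩
    have hco := ΔA.coassoc
    have hcu := ΔA.counit_id
    obtain ⟨σ, hσ⟩ := (canHat ΔA.ρ).exists_rightInverse_of_surjective
      (LinearMap.range_eq_top.2 hsurj)
    set ρ : A →ₗ[k] A ⊗[k] C := ΔA.ρ with hρ
    set s0 : A →ₗ[k] A := mul' k A ∘ₗ Φinv.lTensor A ∘ₗ ρ with hs0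
    have hs0a : ∀ a : A, s0 a = mul' k A ((Φinv.lTensor A) (ρ a)) := fun a => rfl
    have hs0mem : ∀ a : A, s0 a ∈ B := by
      intro a
      rw [hB, coinvB, Set.mem_setOf_eq]
      intro a'
      rw [hs0a]
      exact st18coinv hσ hker hsurj hΦ h12 h21 hco a a'
    set s : A →ₗ[k] ↥B :=
      { toFun := fun a => ⟨s0 a, hs0mem a⟩
        map_add' := fun a b => by ext; simp
        map_smul' := fun r a => by ext; simp } with hsdef
    have hcoe : ∀ a : A, (s a : A) = s0 a := fun a => rfl
    have hsB : ∀ (b : ↥B) (a : A), s ((b : A) * a) = b * s a := by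
      intro b a
      apply Subtype.ext
      rw [MulMemClass.coe_mul, hcoe, hcoe]
      have hb : (b : A) ∈ coinvB k ρ := (hB b).1 b.2
      rw [coinvB, Set.mem_setOf_eq] at hb
      rw [hs0a, hs0a, hb a]
      exact st18mulLin Φinv (b : A) (ρ a)
    have hιs : B.val.toLinearMap ∘ₗ s = s0 := LinearMap.ext fun a => rfl
    refine ⟨s, hsB, ?_⟩
    set sh : A →ₗ[k] ↥B ⊗[k] C := s.rTensor C ∘ₗ ρ with hsh
    set lam : ↥B ⊗[k] C →ₗ[k] A :=
      mul' k A ∘ₗ TensorProduct.map B.val.toLinearMap Φ with hlam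
    have hls : ∀ a : A, lam (sh a) = a := by
      intro a
      have h1 : TensorProduct.map B.val.toLinearMap Φ ∘ₗ s.rTensor C
          = TensorProduct.map s0 Φ := by
        rw [LinearMap.map_comp_rTensor, hιs]
      have h2 := LinearMap.congr_fun h1 (ρ a)
      simp only [comp_apply] at h2
      rw [hlam, hsh]
      simp only [comp_apply]
      rw [h2, hs0]
      exact st18KEY1 hco hcu h21 a
    have hsl : ∀ z : ↥B ⊗[k] C, sh (lam z) = z := by
      have key : ∀ (b : ↥B) (c : C), sh ((b : A) * Φ c) = b ⊗ₜ[k] c := by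
        intro b c
        obtain ⟨S, hS⟩ := TensorProduct.exists_finset (Coalgebra.comul (R := k) c)
        have hb : (b : A) ∈ coinvB k ρ := (hB b).1 b.2
        rw [coinvB, Set.mem_setOf_eq] at hb
        have hρΦ : ρ (Φ c) = Φ.rTensor C (Coalgebra.comul (R := k) c) := by
          have := LinearMap.congr_fun hΦ c
          simpa only [comp_apply] using this
        have e1 : sh ((b : A) * Φ c)
            = (s.rTensor C) ((LinearMap.mulLeft k (b : A)).rTensor C
                (Φ.rTensor C (Coalgebra.comul (R := k) c))) := by
          rw [hsh, comp_apply, hb (Φ c), hρΦ]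
        rw [e1, hS]
        simp only [map_sum, rTensor_tmul, mulLeft_apply]
        have e2 : ∀ i : C × C, s ((b : A) * Φ i.1)
            = Coalgebra.counit (R := k) i.1 • b := by
          intro i
          rw [hsB b (Φ i.1)]
          have e3 : s (Φ i.1) = algebraMap k ↥B (Coalgebra.counit (R := k) i.1) := by
            apply Subtype.ext
            rw [hcoe, hs0a]
            rw [st18sPhi hΦ h12 i.1]
            simp
          rw [e3, Algebra.smul_def, ← Algebra.commutes]
        calc ∑ i ∈ S, s ((b : A) * Φ i.1) ⊗ₜ[k] i.2
            = ∑ i ∈ S, b ⊗ₜ[k] (Coalgebra.counit (R := k) i.1 • i.2) := by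
              refine Finset.sum_congr rfl fun i _ => ?_
              rw [e2 i, smul_tmul]
          _ = b ⊗ₜ[k] ∑ i ∈ S, Coalgebra.counit (R := k) i.1 • i.2 := by
              rw [tmul_sum]
          _ = b ⊗ₜ[k] c := by rw [st18counitsum hS]
      intro z
      induction z using TensorProduct.induction_on with
      | zero => simp
      | tmul b c =>
          have : lam (b ⊗ₜ[k] c) = (b : A) * Φ c := by
            rw [hlam, comp_apply, map_tmul, mul'_apply]
            rfl
          rw [this, key]
      | add u v hu hv => rw [map_add, map_add, hu, hv]
    exact ⟨Function.LeftInverse.injective hls, fun z => ⟨lam z, hsl z⟩⟩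
  · rintro ⟨s, hsB, hbij⟩
    have hco := ΔA.coassoc
    have hcu := ΔA.counit_id
    set ρ : A →ₗ[k] A ⊗[k] C := ΔA.ρ with hρ
    set ι : ↥B →ₗ[k] A := B.val.toLinearMap with hι
    set sh : A →ₗ[k] ↥B ⊗[k] C := s.rTensor C ∘ₗ ρ with hsh
    set e : A ≃ₗ[k] ↥B ⊗[k] C := LinearEquiv.ofBijective sh hbij with he
    have heapp : ∀ a : A, e a = sh a := fun a => rfl
    set Φ : C →ₗ[k] A := e.symm.toLinearMap ∘ₗ TensorProduct.mk k ↥B C 1 with hΦdef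
    have hshΦ : ∀ c : C, sh (Φ c) = (1 : ↥B) ⊗ₜ[k] c := by
      intro c
      have h0 : Φ c = e.symm ((1 : ↥B) ⊗ₜ[k] c) := rfl
      rw [h0, ← heapp, e.apply_symm_apply]
    have hBc : ∀ (b : ↥B) (x : A), ρ ((b : A) * x)
        = (LinearMap.mulLeft k (b : A)).rTensor C (ρ x) := by
      intro b x
      have hb := (hB b).1 b.2
      rw [coinvB, Set.mem_setOf_eq] at hb
      exact hb x
    have hshB : ∀ (b : ↥B) (x : A), sh ((b : A) * x)
        = (LinearMap.mulLeft k b).rTensor C (sh x) := by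
      intro b x
      have h1 : sh ((b : A) * x)
          = (s.rTensor C) ((LinearMap.mulLeft k (b : A)).rTensor C (ρ x)) := by
        show (s.rTensor C) (ρ ((b : A) * x)) = _
        rw [hBc]
      have h2 : s.rTensor C ∘ₗ (LinearMap.mulLeft k (b : A)).rTensor C
          = (LinearMap.mulLeft k b).rTensor C ∘ₗ s.rTensor C := by
        rw [← rTensor_comp, ← rTensor_comp]
        congr 1
        exact LinearMap.ext fun x' => hsB b x'
      have h3 := LinearMap.congr_fun h2 (ρ x)
      simp only [comp_apply] at h3
      rw [h1, h3]
      rfl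
    have hshlam : ∀ z : ↥B ⊗[k] C, sh (mul' k A (TensorProduct.map ι Φ z)) = z := by
      intro z
      induction z using TensorProduct.induction_on with
      | zero => simp
      | tmul b c =>
          rw [map_tmul, mul'_apply]
          show sh ((b : A) * Φ c) = _
          rw [hshB, hshΦ, rTensor_tmul, mulLeft_apply, mul_one]
      | add u v hu hv => rw [map_add, map_add, map_add, hu, hv]
    have hKEY1 : ∀ a : A, mul' k A (TensorProduct.map (ι ∘ₗ s) Φ (ρ a)) = a := by
      intro a
      apply hbij.1
      have h1 : TensorProduct.map ι Φ ∘ₗ s.rTensor C = TensorProduct.map (ι ∘ₗ s) Φ := by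
        rw [LinearMap.map_comp_rTensor]
      have h2 := LinearMap.congr_fun h1 (ρ a)
      simp only [comp_apply] at h2
      rw [← h2]
      have h3 : (s.rTensor C) (ρ a) = sh a := rfl
      rw [h3, hshlam]
    have hinj2 : Function.Injective (sh.rTensor C) := by
      have hEq : sh.rTensor C = (TensorProduct.congr e (LinearEquiv.refl k C)).toLinearMap := by
        apply TensorProduct.ext'
        intro x c
        simp only [rTensor_tmul, LinearEquiv.coe_coe, TensorProduct.congr_tmul,
          LinearEquiv.refl_apply]
        rw [heapp]
      rw [hEq]
      exact (TensorProduct.congr e (LinearEquiv.refl k C)).injective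
    have hΦcol : ρ ∘ₗ Φ = Φ.rTensor C ∘ₗ Coalgebra.comul (R := k) := by
      apply LinearMap.ext
      intro c
      apply hinj2
      have hLHS : (sh.rTensor C) (ρ (Φ c))
          = (TensorProduct.assoc k ↥B C C).symm
              (((Coalgebra.comul (R := k) (A := C)).lTensor ↥B) (sh (Φ c))) := by
        have h1 : sh.rTensor C = (s.rTensor C).rTensor C ∘ₗ ρ.rTensor C := by
          rw [hsh, rTensor_comp]
        rw [LinearMap.congr_fun h1 (ρ (Φ c)), comp_apply]
        have h2 : (ρ.rTensor C) (ρ (Φ c)) = (TensorProduct.assoc k A C C).symm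
            (((Coalgebra.comul (R := k) (A := C)).lTensor A) (ρ (Φ c))) := by
          have h4 := LinearMap.congr_fun hco (Φ c)
          simp only [comp_apply, LinearEquiv.coe_coe] at h4
          rw [h4, LinearEquiv.symm_apply_apply]
        rw [h2]
        have h5 : ∀ z : A ⊗[k] C, ((s.rTensor C).rTensor C)
            ((TensorProduct.assoc k A C C).symm
              (((Coalgebra.comul (R := k) (A := C)).lTensor A) z))
            = (TensorProduct.assoc k ↥B C C).symm
              (((Coalgebra.comul (R := k) (A := C)).lTensor ↥B) ((s.rTensor C) z)) := by
          intro z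
          induction z using TensorProduct.induction_on with
          | zero => simp
          | tmul a c' =>
              rw [lTensor_tmul, st18swap (k := k) s a, rTensor_tmul, lTensor_tmul]
          | add u v hu hv => simp only [map_add, hu, hv]
        rw [h5]
        have h6 : (s.rTensor C) (ρ (Φ c)) = sh (Φ c) := rfl
        rw [h6]
      simp only [comp_apply]
      rw [hLHS, hshΦ, lTensor_tmul]
      have hRHS : (sh.rTensor C) ((Φ.rTensor C) (Coalgebra.comul (R := k) c))
          = ((TensorProduct.mk k ↥B C 1).rTensor C) (Coalgebra.comul (R := k) c) := by
        rw [← comp_apply, ← rTensor_comp]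
        congr 2
        exact LinearMap.ext fun c' => hshΦ c'
      rw [hRHS, st18mk1]
    obtain ⟨σ', hσ'⟩ := (canHat ρ).exists_rightInverse_of_surjective
      (LinearMap.range_eq_top.2 hsurj)
    set g : A ⊗[k] A →ₗ[k] A := mul' k A ∘ₗ (ι ∘ₗ s).lTensor A with hgdef
    have hg_tmul : ∀ x y : A, g (x ⊗ₜ[k] y) = x * (s y : A) := by
      intro x y
      rw [hgdef, comp_apply, lTensor_tmul, mul'_apply]
      rfl
    have hgrel : relSub k (coinvB k ρ) ≤ LinearMap.ker g := by
      rw [relSub, Submodule.span_le]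
      rintro x ⟨a, a', b, hb, rfl⟩
      simp only [SetLike.mem_coe, mem_ker, map_sub, hg_tmul]
      have hbB : b ∈ B := (hB b).2 hb
      have h7 : s (b * a') = (⟨b, hbB⟩ : ↥B) * s a' := hsB ⟨b, hbB⟩ a'
      rw [h7, MulMemClass.coe_mul, mul_assoc, sub_self]
    set Φbar : A ⊗[k] C →ₗ[k] A := g ∘ₗ σ' with hΦbardef
    have hΦbar : ∀ w : A ⊗[k] A, Φbar (canHat ρ w) = g w := by
      intro w
      have hmem : σ' (canHat ρ w) - w ∈ LinearMap.ker (canHat ρ) := by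
        rw [mem_ker, map_sub, sub_eq_zero]
        exact LinearMap.congr_fun hσ' (canHat ρ w)
      rw [hker] at hmem
      have h6 := hgrel hmem
      rw [mem_ker, map_sub, sub_eq_zero] at h6
      rw [hΦbardef, comp_apply]
      exact h6
    have hg_mulLeft : ∀ (b : A) (w : A ⊗[k] A),
        g ((LinearMap.mulLeft k b).rTensor A w) = b * g w := by
      intro b w
      induction w using TensorProduct.induction_on with
      | zero => simp
      | tmul x y => rw [rTensor_tmul, mulLeft_apply, hg_tmul, hg_tmul, mul_assoc]
      | add u v hu hv => simp only [map_add, hu, hv, mul_add]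
    have hΦbarA : ∀ (b : A) (z : A ⊗[k] C),
        Φbar ((LinearMap.mulLeft k b).rTensor C z) = b * Φbar z := by
      intro b z
      obtain ⟨w, rfl⟩ := hsurj z
      rw [← st18canHat_mulLeft, hΦbar, hΦbar, hg_mulLeft]
    have hΦbarρ : ∀ x : A, Φbar (ρ x) = (s x : A) := by
      intro x
      rw [← st18canHat_one_tmul ρ x, hΦbar, hg_tmul, one_mul]
    set Φinv : C →ₗ[k] A := Φbar ∘ₗ (TensorProduct.mk k A C) 1 with hΦinvdef
    have hΦinva : ∀ c : C, Φinv c = Φbar ((1 : A) ⊗ₜ[k] c) := fun c => rfl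
    refine ⟨Φ, Φinv, ?_, ?_, hΦcol⟩
    · apply LinearMap.ext
      intro c
      obtain ⟨S, hS⟩ := TensorProduct.exists_finset (Coalgebra.comul (R := k) c)
      have hstep : conv Φ Φinv c = Φbar ((Φ.rTensor C) (Coalgebra.comul (R := k) c)) := by
        rw [conv, comp_apply, comp_apply, hS]
        simp only [map_sum]
        refine Finset.sum_congr rfl fun i _ => ?_
        rw [map_tmul, mul'_apply, hΦinva, ← hΦbarA]
        congr 1
        rw [rTensor_tmul, mulLeft_apply, mul_one, rTensor_tmul]
      have hρΦ : (Φ.rTensor C) (Coalgebra.comul (R := k) c) = ρ (Φ c) := by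
        have h8 := LinearMap.congr_fun hΦcol c
        simp only [comp_apply] at h8
        exact h8.symm
      rw [hstep, hρΦ, hΦbarρ]
      have hFs := LinearMap.congr_fun (st18F (k := k) (C := C) s) (ρ (Φ c))
      simp only [comp_apply, LinearEquiv.coe_coe] at hFs
      have hx : (s.rTensor C) (ρ (Φ c)) = (1 : ↥B) ⊗ₜ[k] c := by
        have h9 : (s.rTensor C) (ρ (Φ c)) = sh (Φ c) := rfl
        rw [h9, hshΦ]
      have hy : (TensorProduct.rid k A)
          (((Coalgebra.counit (R := k) (A := C)).lTensor A) (ρ (Φ c))) = Φ c := by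
        have h10 := LinearMap.congr_fun hcu (Φ c)
        simpa only [comp_apply, LinearEquiv.coe_coe, id_apply] using h10
      rw [hx, hy, lTensor_tmul, rid_tmul] at hFs
      rw [← hFs, convUnit, comp_apply, Algebra.linearMap_apply,
        Algebra.algebraMap_eq_smul_one]
      simp
    · set h : A ⊗[k] C →ₗ[k] A := mul' k A ∘ₗ Φ.lTensor A ∘ₗ Φbar.rTensor C
        ∘ₗ (TensorProduct.assoc k A C C).symm.toLinearMap
        ∘ₗ (Coalgebra.comul (R := k) (A := C)).lTensor A with hhdef
      have hh_tmul : ∀ (u : A) (c : C) (S : Finset (C × C)),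
          Coalgebra.comul (R := k) c = ∑ i ∈ S, i.1 ⊗ₜ[k] i.2 →
          h (u ⊗ₜ[k] c) = ∑ i ∈ S, Φbar (u ⊗ₜ[k] i.1) * Φ i.2 := by
        intro u c S hS
        rw [hhdef]
        simp only [comp_apply, LinearEquiv.coe_coe]
        rw [lTensor_tmul, hS, tmul_sum, map_sum, map_sum, map_sum, map_sum]
        refine Finset.sum_congr rfl fun i _ => ?_
        rw [TensorProduct.assoc_symm_tmul, rTensor_tmul, lTensor_tmul, mul'_apply]
      have hKEY2 : ∀ x : A, h (ρ x) = x := by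
        intro x
        rw [hhdef]
        simp only [comp_apply, LinearEquiv.coe_coe]
        have h2 : (TensorProduct.assoc k A C C).symm
            (((Coalgebra.comul (R := k) (A := C)).lTensor A) (ρ x))
            = (ρ.rTensor C) (ρ x) := by
          have h4 := LinearMap.congr_fun hco x
          simp only [comp_apply, LinearEquiv.coe_coe] at h4
          rw [h4, LinearEquiv.symm_apply_apply]
        rw [h2]
        have h3 : Φbar.rTensor C ∘ₗ ρ.rTensor C = (ι ∘ₗ s).rTensor C := by
          rw [← rTensor_comp]
          congr 1
          exact LinearMap.ext fun x' => hΦbarρ x'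
        have h3' := LinearMap.congr_fun h3 (ρ x)
        simp only [comp_apply] at h3'
        rw [h3']
        have h4 : Φ.lTensor A ∘ₗ (ι ∘ₗ s).rTensor C = TensorProduct.map (ι ∘ₗ s) Φ := by
          rw [LinearMap.lTensor_comp_rTensor]
        have h4' := LinearMap.congr_fun h4 (ρ x)
        simp only [comp_apply] at h4'
        rw [h4']
        exact hKEY1 x
      have hh_mulLeft : ∀ (b : A) (z : A ⊗[k] C),
          h ((LinearMap.mulLeft k b).rTensor C z) = b * h z := by
        intro b z
        induction z using TensorProduct.induction_on with
        | zero => simp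
        | tmul u c =>
            obtain ⟨S, hS⟩ := TensorProduct.exists_finset (Coalgebra.comul (R := k) c)
            rw [rTensor_tmul, mulLeft_apply, hh_tmul (b * u) c S hS, hh_tmul u c S hS,
              Finset.mul_sum]
            refine Finset.sum_congr rfl fun i _ => ?_
            have h11 : (b * u) ⊗ₜ[k] i.1
                = (LinearMap.mulLeft k b).rTensor C (u ⊗ₜ[k] i.1) := by
              rw [rTensor_tmul, mulLeft_apply]
            rw [h11, hΦbarA, mul_assoc]
        | add u v hu hv => simp only [map_add, hu, hv, mul_add]
      have hhE : ∀ z : A ⊗[k] C, h z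
          = (TensorProduct.rid k A)
              (((Coalgebra.counit (R := k) (A := C)).lTensor A) z) := by
        intro z
        obtain ⟨w, rfl⟩ := hsurj z
        induction w using TensorProduct.induction_on with
        | zero => simp
        | tmul a a' =>
            rw [st18canHat_tmul, hh_mulLeft, st18E_mulLeft]
            have h7 := LinearMap.congr_fun hcu a'
            simp only [comp_apply, LinearEquiv.coe_coe, id_apply] at h7
            rw [hKEY2, h7]
        | add u v hu hv => simp only [map_add, hu, hv]
      apply LinearMap.ext
      intro c
      obtain ⟨S, hS⟩ := TensorProduct.exists_finset (Coalgebra.comul (R := k) c)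
      have hL : conv Φinv Φ c = h ((1 : A) ⊗ₜ[k] c) := by
        rw [conv, comp_apply, comp_apply, hS, map_sum, map_sum, hh_tmul 1 c S hS]
        refine Finset.sum_congr rfl fun i _ => ?_
        rw [map_tmul, mul'_apply, hΦinva]
      rw [hL, hhE, lTensor_tmul, rid_tmul, convUnit, comp_apply, Algebra.linearMap_apply,
        Algebra.algebraMap_eq_smul_one]
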